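/- For all integers k and n with 1 ≤ k ≤ n/2, every prime p, every vector a in F_p^n, and every α in [0,1], one has R_k(a) ≤ R_k^α(a) + (40·k^{1−α}·n^{1+α})^k. -/

import Mathlib

open scoped BigOperators

/-- `R_k(a)`: the number of choices of `2k` signs and `2k` indices (repetition allowed) with
`±a_{i₁} ± ⋯ ± a_{i_{2k}} = 0` in `F_p`. -/
noncomputable def Rk (p : ℕ) (k : ℕ) {ι : Type} (a : ι → ZMod p) : ℕ :=
  Set.ncard {z : (Fin (2 * k) → Bool) × (Fin (2 * k) → ι) |
    (∑ j, if z.1 j then a (z.2 j) else -a (z.2 j)) = 0}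

/-- `R_k^α(a)`: the number of choices of `2k` signs and `2k` indices with
`±a_{i₁} ± ⋯ ± a_{i_{2k}} = 0` in `F_p` that use at least `(1+α)k` distinct indices. -/
noncomputable def RkA (p : ℕ) (k : ℕ) (α : ℝ) {ι : Type} (a : ι → ZMod p) : ℕ :=
  Set.ncard {z : (Fin (2 * k) → Bool) × (Fin (2 * k) → ι) |
    ((∑ j, if z.1 j then a (z.2 j) else -a (z.2 j)) = 0) ∧
    (1 + α) * k ≤ ((Set.range z.2).ncard : ℝ)}


lemma one_add_rpow_le {α : ℝ} (h0 : 0 ≤ α) (h1 : α ≤ 1) :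
    (1 + α) ^ ((1:ℝ) - α) ≤ 13/10 := by
  have hpos : (0:ℝ) < 1 + α := by linarith
  rw [Real.rpow_def_of_pos hpos]
  have hlog : Real.log (1 + α) ≤ α := by
    have := Real.log_le_sub_one_of_pos hpos
    linarith
  have hlog0 : 0 ≤ Real.log (1 + α) := Real.log_nonneg (by linarith)
  have h2 : Real.log (1 + α) * (1 - α) ≤ 1/4 := by nlinarith [sq_nonneg (Real.log (1+α) - α), sq_nonneg (2*α - 1)]
  have h3 : Real.exp (Real.log (1 + α) * (1 - α)) ≤ Real.exp (1/4) :=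
    Real.exp_le_exp.mpr h2
  refine h3.trans ?_
  have h4 : Real.exp (1/4) ^ (4:ℕ) = Real.exp 1 := by
    rw [← Real.exp_nat_mul]; norm_num
  have h5 : Real.exp (1/4) ^ (4:ℕ) ≤ (13/10:ℝ) ^ (4:ℕ) := by
    rw [h4]; nlinarith [Real.exp_one_lt_d9]
  exact le_of_pow_le_pow_left₀ (by norm_num) (by norm_num) h5


open Finset in
lemma fiber_count (N n : ℕ) (S : Finset (Fin N)) :
    Nat.card {f : Fin N → Fin n //
      Finset.univ.filter (fun j => ∀ i, i < j → f i ≠ f j) = S} ≤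
      n ^ S.card * S.card ^ (N - S.card) := by
  classical
  -- first-occurrence pointer
  have hP : ∀ (f : Fin N → Fin n) (j : Fin N),
      ∃ i : Fin N, f i = f j ∧ ∀ i', i' < i → f i' ≠ f i := by
    intro f j
    have hs : j ∈ univ.filter (fun i => f i = f j) := by simp
    refine ⟨(univ.filter (fun i => f i = f j)).min' ⟨j, hs⟩, ?_, ?_⟩
    · have := (univ.filter (fun i => f i = f j)).min'_mem ⟨j, hs⟩
      simpa using this
    · intro i' hi' heq
      have h1 : f i' = f j := by
        rw [heq]
        have := (univ.filter (fun i => f i = f j)).min'_mem ⟨j, hs⟩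
        simpa using this
      have : (univ.filter (fun i => f i = f j)).min' ⟨j, hs⟩ ≤ i' :=
        min'_le _ _ (by simp [h1])
      exact absurd hi' (not_lt.mpr this)
  set T := {f : Fin N → Fin n //
      Finset.univ.filter (fun j => ∀ i, i < j → f i ≠ f j) = S} with hT
  have hmemS : ∀ (z : T) (j : Fin N), (hP z.1 j).choose ∈ S := by
    rintro ⟨f, hf⟩ j
    have : (hP f j).choose ∈ univ.filter (fun j => ∀ i, i < j → f i ≠ f j) := by
      simp only [mem_filter, mem_univ, true_and]
      exact fun i hi => (hP f j).choose_spec.2 i hi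
    rw [hf] at this
    exact this
  let Ψ : T → (↥S → Fin n) × (↥(Sᶜ) → ↥S) := fun z =>
    (fun i => z.1 i.1, fun j => ⟨(hP z.1 j.1).choose, hmemS z j.1⟩)
  have hinj : Function.Injective Ψ := by
    intro z w h
    have h1 : ∀ i : ↥S, z.1 i.1 = w.1 i.1 := fun i => congrFun (congrArg Prod.fst h) i
    have h2 : ∀ j : ↥(Sᶜ), (hP z.1 j.1).choose = (hP w.1 j.1).choose := by
      intro j
      have := congrFun (congrArg Prod.snd h) j
      exact congrArg Subtype.val this
    apply Subtype.ext
    funext j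
    by_cases hj : j ∈ S
    · exact h1 ⟨j, hj⟩
    · have hjc : j ∈ Sᶜ := by simpa using hj
      have e1 : z.1 ((hP z.1 j).choose) = z.1 j := (hP z.1 j).choose_spec.1
      have e2 : w.1 ((hP w.1 j).choose) = w.1 j := (hP w.1 j).choose_spec.1
      have e3 : z.1 ((hP z.1 j).choose) = w.1 ((hP z.1 j).choose) :=
        h1 ⟨(hP z.1 j).choose, hmemS z j⟩
      rw [← e1, e3, h2 ⟨j, hjc⟩, e2]
  calc Nat.card T ≤ Nat.card ((↥S → Fin n) × (↥(Sᶜ) → ↥S)) :=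
        Nat.card_le_card_of_injective Ψ hinj
    _ = n ^ S.card * S.card ^ (N - S.card) := by
        simp [Nat.card_eq_fintype_card, Fintype.card_fun, card_compl]

set_option maxHeartbeats 1000000 in

open Finset in
lemma small_range_count (N n m : ℕ)
    (hNn : N ≤ n) (hmN : m ≤ N) :
    Set.ncard {f : Fin N → Fin n | (Set.range f).ncard ≤ m}
      ≤ 2 ^ N * (n ^ m * m ^ (N - m)) := by
  classical
  have hrange : ∀ f : Fin N → Fin n, (Set.range f).ncard = (univ.image f).card := by
    intro f
    rw [← Set.ncard_coe_finset]
    congr 1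
    ext x
    simp [Set.mem_range, eq_comm]
  have hfos : ∀ f : Fin N → Fin n,
      (univ.filter (fun j => ∀ i, i < j → f i ≠ f j)).card ≤ (Set.range f).ncard := by
    intro f
    rw [hrange f]
    apply Finset.card_le_card_of_injOn f
    · intro j _; simp
    · intro i hi j hj hij
      simp only [mem_coe, mem_filter, mem_univ, true_and] at hi hj
      rcases lt_trichotomy i j with h | h | h
      · exact absurd hij (hj i h)
      · exact h
      · exact absurd hij.symm (hi j h)
  set A : Finset (Fin N → Fin n) := univ.filter (fun f => (Set.range f).ncard ≤ m) with hA
  have hset : {f : Fin N → Fin n | (Set.range f).ncard ≤ m} = ↑A := by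
    ext f; simp [hA]
  rw [hset, Set.ncard_coe_finset]
  set 𝒮 : Finset (Finset (Fin N)) := univ.filter (fun S => S.card ≤ m) with h𝒮
  have hcardsum : A.card = ∑ S ∈ 𝒮,
      (A.filter (fun f => univ.filter (fun j => ∀ i, i < j → f i ≠ f j) = S)).card := by
    apply Finset.card_eq_sum_card_fiberwise
    intro f hf
    simp only [hA, mem_coe, mem_filter, mem_univ, true_and] at hf
    simp only [h𝒮, mem_coe, mem_filter, mem_univ, true_and]
    exact le_trans (hfos f) hf
  rw [hcardsum]
  have hbound : ∀ S ∈ 𝒮,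
      (A.filter (fun f => univ.filter (fun j => ∀ i, i < j → f i ≠ f j) = S)).card
        ≤ n ^ m * m ^ (N - m) := by
    intro S hS
    simp only [h𝒮, mem_filter, mem_univ, true_and] at hS
    have h1 : (A.filter (fun f => univ.filter (fun j => ∀ i, i < j → f i ≠ f j) = S)).card
        ≤ (univ.filter (fun f : Fin N → Fin n =>
            univ.filter (fun j => ∀ i, i < j → f i ≠ f j) = S)).card := by
      apply Finset.card_le_card
      intro f hf
      simp only [mem_filter, mem_univ, true_and] at hf ⊢
      exact hf.2
    have h2 : (univ.filter (fun f : Fin N → Fin n =>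
        univ.filter (fun j => ∀ i, i < j → f i ≠ f j) = S)).card
        ≤ n ^ S.card * S.card ^ (N - S.card) := by
      rw [← Fintype.card_subtype, ← Nat.card_eq_fintype_card]
      exact fiber_count N n S
    refine (h1.trans h2).trans ?_
    have hrn : S.card ≤ n := le_trans (card_le_card (subset_univ S)) (by simpa using hNn)
    have e1 : N - S.card = (m - S.card) + (N - m) := by
      rw [add_comm, tsub_add_tsub_cancel hmN hS]
    have e2 : m = S.card + (m - S.card) := (Nat.add_sub_cancel' hS).symm
    calc n ^ S.card * S.card ^ (N - S.card)
        = n ^ S.card * (S.card ^ (m - S.card) * S.card ^ (N - m)) := by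
          rw [e1, pow_add]
      _ ≤ n ^ S.card * (n ^ (m - S.card) * m ^ (N - m)) := by
          gcongr
      _ = n ^ m * m ^ (N - m) := by
          rw [← mul_assoc, ← pow_add, ← e2]
  calc ∑ S ∈ 𝒮, (A.filter (fun f =>
          univ.filter (fun j => ∀ i, i < j → f i ≠ f j) = S)).card
      ≤ ∑ _S ∈ 𝒮, (n ^ m * m ^ (N - m)) := Finset.sum_le_sum hbound
    _ = 𝒮.card * (n ^ m * m ^ (N - m)) := by rw [Finset.sum_const, smul_eq_mul]
    _ ≤ 2 ^ N * (n ^ m * m ^ (N - m)) := by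
        apply Nat.mul_le_mul_right
        calc 𝒮.card ≤ (univ : Finset (Finset (Fin N))).card := card_filter_le _ _
          _ = 2 ^ N := by simp [Finset.card_univ]

/-- For all integers `1 ≤ k ≤ n/2`, every prime `p`, every `a ∈ F_p^n` and every `α ∈ [0,1]`,
`R_k(a) ≤ R_k^α(a) + (40·k^{1−α}·n^{1+α})^k`. -/
theorem Rk_le_RkA_add :
    ∀ (k n : ℕ), 1 ≤ k → 2 * k ≤ n → ∀ (p : ℕ), p.Prime →
      ∀ (a : Fin n → ZMod p) (α : ℝ), 0 ≤ α → α ≤ 1 →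
        (Rk p k a : ℝ) ≤
          (RkA p k α a : ℝ) +
            (40 * (k : ℝ) ^ ((1 : ℝ) - α) * (n : ℝ) ^ ((1 : ℝ) + α)) ^ k := by
  intro k n hk hkn p hp a α hα0 hα1
  classical
  have hk1 : (1:ℝ) ≤ (k:ℝ) := by exact_mod_cast hk
  have hkR : (0:ℝ) < (k:ℝ) := by linarith
  have hnR : (2:ℝ) * k ≤ (n:ℝ) := by exact_mod_cast hkn
  have hn0 : (0:ℝ) < (n:ℝ) := by linarith
  set x : ℝ := (1 + α) * (k:ℝ) with hxdef
  have hx0 : 0 < x := by positivity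
  have hceil : 1 ≤ ⌈x⌉₊ := Nat.one_le_ceil_iff.mpr hx0
  obtain ⟨m, hmdef⟩ : ∃ m : ℕ, m = ⌈x⌉₊ - 1 := ⟨_, rfl⟩
  have hmcast : (m:ℝ) = (⌈x⌉₊:ℝ) - 1 := by
    rw [hmdef, Nat.cast_sub hceil, Nat.cast_one]
  have hmx : (m:ℝ) < x := by
    have h := Nat.ceil_lt_add_one hx0.le
    linarith [hmcast, h]
  have hxm1 : x ≤ (m:ℝ) + 1 := by
    have := Nat.le_ceil x
    linarith [hmcast]
  have hx2k : x ≤ 2 * (k:ℝ) := by nlinarith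
  have hm2k : m < 2 * k := by
    have : (m:ℝ) < ((2*k : ℕ):ℝ) := by push_cast; linarith
    exact_mod_cast this
  -- the bad set
  set Bset : Set ((Fin (2 * k) → Bool) × (Fin (2 * k) → Fin n)) :=
    {z | (Set.range z.2).ncard ≤ m} with hBdef
  set Fset : Set (Fin (2 * k) → Fin n) := {f | (Set.range f).ncard ≤ m} with hFdef
  -- Step A
  have stepA : Rk p k a ≤ RkA p k α a + Bset.ncard := by
    unfold Rk RkA
    refine le_trans (Set.ncard_le_ncard ?_ (Set.toFinite _)) (Set.ncard_union_le _ _)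
    intro z hz
    by_cases h : (1 + α) * (k:ℝ) ≤ ((Set.range z.2).ncard : ℝ)
    · exact Or.inl ⟨hz, h⟩
    · right
      show (Set.range z.2).ncard ≤ m
      push_neg at h
      have : (Set.range z.2).ncard < ⌈x⌉₊ := Nat.lt_ceil.mpr h
      omega
  -- Step B
  have stepB : Bset.ncard ≤ 2 ^ (2*k) * Fset.ncard := by
    rw [← Nat.card_coe_set_eq, ← Nat.card_coe_set_eq]
    have hinj : Function.Injective
        (fun z : ↥Bset => ((z.1.1, ⟨z.1.2, z.2⟩) : (Fin (2*k) → Bool) × ↥Fset)) := by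
      intro z w h
      apply Subtype.ext
      have h1 := congrArg Prod.fst h
      have h2 := congrArg (fun q => (Prod.snd q : ↥Fset).1) h
      exact Prod.ext h1 h2
    calc Nat.card ↥Bset ≤ Nat.card ((Fin (2*k) → Bool) × ↥Fset) :=
          Nat.card_le_card_of_injective _ hinj
      _ = 2 ^ (2*k) * Nat.card ↥Fset := by
          rw [Nat.card_prod]
          congr 1
          simp [Nat.card_eq_fintype_card]
  -- Step C
  have stepC : Fset.ncard ≤ 2 ^ (2*k) * (n ^ m * m ^ (2*k - m)) :=
    small_range_count (2*k) n m hkn hm2k.le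
  -- combine in ℕ
  have hnat : Rk p k a ≤ RkA p k α a + 2^(2*k) * (2^(2*k) * (n^m * m^(2*k-m))) := by
    calc Rk p k a ≤ RkA p k α a + Bset.ncard := stepA
      _ ≤ RkA p k α a + 2^(2*k) * Fset.ncard := by
          exact Nat.add_le_add_left (stepB) _
      _ ≤ _ := by
          exact Nat.add_le_add_left (Nat.mul_le_mul_left _ stepC) _
  -- real part
  have hreal : ((2:ℝ)^(2*k) * (2^(2*k) * ((n:ℝ)^m * (m:ℝ)^(2*k-m))))
      ≤ (40 * (k : ℝ) ^ ((1 : ℝ) - α) * (n : ℝ) ^ ((1 : ℝ) + α)) ^ k := by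
    have hxn : x ≤ (n:ℝ) := le_trans hx2k hnR
    have hθ0 : 0 ≤ x - m := by linarith
    -- m^(2k-m) ≤ x^((1-α)k) * x^(x-m)
    have hA1 : ((m:ℝ))^(2*k-m) ≤ x^(2*k-m) := pow_le_pow_left₀ (Nat.cast_nonneg m) hmx.le _
    have hA2 : x^(2*k-m : ℕ) = x ^ ((1-α)*(k:ℝ)) * x ^ (x - m) := by
      rw [← Real.rpow_natCast x (2*k-m), ← Real.rpow_add hx0]
      congr 1
      have hc : ((2*k - m : ℕ):ℝ) = 2*(k:ℝ) - m := by
        rw [Nat.cast_sub hm2k.le]; push_cast; ring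
      rw [hc, hxdef]; ring
    have hA3 : x ^ (x - m) ≤ (n:ℝ) ^ (x - m) :=
      Real.rpow_le_rpow hx0.le hxn hθ0
    have hA4 : (n:ℝ)^(m:ℕ) * (n:ℝ)^(x - m) = ((n:ℝ) ^ ((1:ℝ)+α))^k := by
      rw [← Real.rpow_natCast (n:ℝ) m, ← Real.rpow_add hn0]
      have : (m:ℝ) + (x - m) = (1+α)*(k:ℝ) := by rw [hxdef]; ring
      rw [this, Real.rpow_mul hn0.le, Real.rpow_natCast]
    have hA5 : x ^ ((1-α)*(k:ℝ)) = (x ^ ((1:ℝ)-α))^k := by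
      rw [Real.rpow_mul hx0.le, Real.rpow_natCast]
    have hA6 : x ^ ((1:ℝ)-α) ≤ (13/10) * (k:ℝ) ^ ((1:ℝ)-α) := by
      rw [hxdef, Real.mul_rpow (by linarith) hkR.le]
      have := one_add_rpow_le hα0 hα1
      have hknn : (0:ℝ) ≤ (k:ℝ) ^ ((1:ℝ)-α) := Real.rpow_nonneg hkR.le _
      nlinarith
    have h2k4 : (2:ℝ)^(2*k) = 4^k := by rw [pow_mul]; norm_num
    have hknn : (0:ℝ) ≤ (k:ℝ) ^ ((1:ℝ)-α) := Real.rpow_nonneg hkR.le _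
    have hnnn : (0:ℝ) ≤ (n:ℝ) ^ ((1:ℝ)+α) := Real.rpow_nonneg hn0.le _
    calc (2:ℝ)^(2*k) * (2^(2*k) * ((n:ℝ)^m * (m:ℝ)^(2*k-m)))
        ≤ (2:ℝ)^(2*k) * (2^(2*k) * ((n:ℝ)^m * (x^((1-α)*(k:ℝ)) * x^(x-m)))) := by
          rw [← hA2]
          gcongr
      _ ≤ (2:ℝ)^(2*k) * (2^(2*k) * ((n:ℝ)^m * (x^((1-α)*(k:ℝ)) * (n:ℝ)^(x-m)))) := by
          gcongr
      _ = ((4:ℝ)^k * 4^k) * x^((1-α)*(k:ℝ)) * ((n:ℝ)^m * (n:ℝ)^(x-m)) := by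
          rw [h2k4]; ring
      _ = 16^k * ((x ^ ((1:ℝ)-α))^k * ((n:ℝ) ^ ((1:ℝ)+α))^k) := by
          have h44 : (4:ℝ)^k * 4^k = 16^k := by rw [← mul_pow]; norm_num
          rw [hA4, hA5, h44]
          ring
      _ = (16 * (x ^ ((1:ℝ)-α)) * ((n:ℝ) ^ ((1:ℝ)+α)))^k := by
          rw [mul_pow, mul_pow]
          ring
      _ ≤ (40 * (k : ℝ) ^ ((1 : ℝ) - α) * (n : ℝ) ^ ((1 : ℝ) + α)) ^ k := by
          apply pow_le_pow_left₀
          · positivity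
          · have h16 : 16 * (x ^ ((1:ℝ)-α)) ≤ 40 * (k:ℝ) ^ ((1:ℝ)-α) := by linarith
            exact mul_le_mul_of_nonneg_right h16 hnnn
  have hnatR : (Rk p k a : ℝ) ≤ (RkA p k α a : ℝ)
      + 2^(2*k) * (2^(2*k) * ((n:ℝ)^m * (m:ℝ)^(2*k-m))) := by
    have h : ((Rk p k a : ℕ) : ℝ) ≤ ((RkA p k α a + 2^(2*k) * (2^(2*k) * (n^m * m^(2*k-m))) : ℕ) : ℝ) :=
      Nat.cast_le.mpr hnat
    push_cast at h
    exact h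
  linarith [hreal, hnatR]
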